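/- Let $\mathcal{C}$ be an $h$-hop consistent SSSP (CSSSP) collection of rooted trees of height $h$ in a graph $G = (V,E)$: for every $u, v \in V$, the path from $u$ to $v$ is the same in every tree of $\mathcal{C}$ containing such a path. Fix a node $c$ and let $T$ be the union, over all trees in $\mathcal{C}$ containing $c$, of the edges on the tree-path from the root to $c$. Then $T$ is an in-tree rooted at $c$ (i.e., every node of $T$ has out-degree at most 1 in $T$, and all paths in $T$ lead to $c$). -/

import Mathlib

private lemma aux_drop {V : Type*} [DecidableEq V] (a : V) :
    ∀ (p r : List V), a ∉ p →
      (p ++ a :: r).dropWhile (fun x => decide (x ≠ a)) = a :: r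
  | [], r, _ => by simp [List.dropWhile]
  | x :: p, r, h => by
    have hx : x ≠ a := fun hxa => h (hxa ▸ (List.mem_cons_self : x ∈ x :: p))
    simp only [List.cons_append, List.dropWhile]
    rw [show (decide (x ≠ a)) = true by simpa using hx]
    exact aux_drop a p r (fun hp => h (List.mem_cons_of_mem x hp))

private lemma aux_path {V : Type*} (T : V → V → Prop) (c : V) :
    ∀ (s : List V), (∀ x y t, (x :: y :: t) <:+ s → T x y) →
      s.getLast? = some c → ∀ x t, s = x :: t → Relation.ReflTransGen T x c
  | [], _, _, x, t, h => by simp at h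
  | [x'], _, hl, x, t, h => by
    injection h with h1 h2
    subst h1; subst h2
    have : x' = c := by simpa using hl
    exact this ▸ Relation.ReflTransGen.refl
  | x' :: y :: t', hs, hl, x, t, h => by
    injection h with h1 h2
    subst h1; subst h2
    have hxy : T x' y := hs x' y t' (List.suffix_refl _)
    have htail : Relation.ReflTransGen T y c :=
      aux_path T c (y :: t')
        (fun a b u hsu => hs a b u (hsu.trans ⟨[x'], rfl⟩))
        (by simpa using hl) y t' rfl
    exact Relation.ReflTransGen.head hxy htail

/-- CSSSP in-tree lemma: let `C` be the set of root-to-`c` tree-paths (one per tree of a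
consistent SSSP collection containing `c`), each a duplicate-free list ending at `c`,
such that any two paths agree on their suffix from any common vertex `w` onwards. Then
the union `T` of their edges is an in-tree rooted at `c`: every node has out-degree at
most `1`, and every edge of `T` leads (along `T`) to `c`. -/
theorem stmt19 {V : Type*} [DecidableEq V] (c : V) (C : Set (List V))
    (hne : ∀ l ∈ C, l ≠ [])
    (hlast : ∀ l ∈ C, l.getLast? = some c)
    (hnodup : ∀ l ∈ C, l.Nodup)
    (hcons : ∀ l ∈ C, ∀ l' ∈ C, ∀ w : V, w ∈ l → w ∈ l' →
      l.dropWhile (fun x => decide (x ≠ w)) = l'.dropWhile (fun x => decide (x ≠ w)))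
    (T : V → V → Prop)
    (hT : ∀ a b, T a b ↔ ∃ l ∈ C, [a, b] <:+: l) :
    (∀ a b b', T a b → T a b' → b = b') ∧
    (∀ a b, T a b → Relation.ReflTransGen T a c) := by
  -- key: for l ∈ C with [a,b] <:+: l, dropWhile gives a :: b :: rest
  have key : ∀ l ∈ C, ∀ a b : V, [a, b] <:+: l →
      ∃ q, l.dropWhile (fun x => decide (x ≠ a)) = a :: b :: q := by
    intro l hl a b ⟨p, q, hpq⟩
    have hl' : l = p ++ a :: (b :: q) := by simpa using hpq.symm
    have hnd := hnodup l hl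
    rw [hl'] at hnd
    have hap : a ∉ p := by
      have := (List.nodup_append'.mp hnd).2.2
      intro hp
      exact this hp (List.mem_cons_self : a ∈ a :: (b :: q))
    exact ⟨q, by rw [hl', aux_drop a p (b :: q) hap]⟩
  constructor
  · intro a b b' hab hab'
    obtain ⟨l, hl, hinf⟩ := (hT a b).mp hab
    obtain ⟨l', hl', hinf'⟩ := (hT a b').mp hab'
    obtain ⟨q, hq⟩ := key l hl a b hinf
    obtain ⟨q', hq'⟩ := key l' hl' a b' hinf'
    have hal : a ∈ l := hinf.mem (by simp)
    have hal' : a ∈ l' := hinf'.mem (by simp)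
    have := hcons l hl l' hl' a hal hal'
    rw [hq, hq'] at this
    exact (List.cons.injEq .. ▸ (List.cons.injEq .. ▸ this).2).1
  · intro a b hab
    obtain ⟨l, hl, p, q, hpq⟩ := (hT a b).mp hab
    have hl' : l = p ++ (a :: b :: q) := by simpa using hpq.symm
    have hsuf : (a :: b :: q) <:+ l := ⟨p, hl'.symm⟩
    have hlast' : (a :: b :: q).getLast? = some c := by
      have h1 := hlast l hl
      rw [hl'] at h1
      rw [List.getLast?_append] at h1
      have h2 : (a :: b :: q).getLast? = some ((a :: b :: q).getLast (by simp)) :=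
        List.getLast?_eq_getLast _
      rw [h2] at h1 ⊢
      simpa using h1
    exact aux_path T c (a :: b :: q)
      (fun x y t hsu => (hT x y).mpr ⟨l, hl,
        List.IsInfix.trans ⟨[], t, by simp⟩ (hsu.trans hsuf).isInfix⟩)
      hlast' a (b :: q) rfl
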